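/- Let t > 0 and 0 < s ≤ s̄₁, and define h(v) = φ(1, φ(2, s, v), t − v) for v ∈ [0, t] (the substrate concentration at time t if the population has 2 bacteria on [0, v] and 1 bacterium on [v, t]). Then h is strictly decreasing on [0, t], and for all 0 ≤ v₁ ≤ v₂ ≤ t one has h(v₁) − h(v₂) ≤ (D·s_in + 2·k·μ(s̄₁))·(v₂ − v₁). -/

import Mathlib

open Set



/-- If `u A ≤ 0` and `u' ≤ 0` wherever `u ≥ 0`, then `u ≤ 0` on `[A,B]`. -/
lemma aux15_nonpos (u u' : ℝ → ℝ) (A B : ℝ)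
    (hd : ∀ x ∈ Icc A B, HasDerivWithinAt u (u' x) (Icc A B) x)
    (h0 : u A ≤ 0)
    (hle : ∀ x ∈ Icc A B, 0 ≤ u x → u' x ≤ 0) :
    ∀ x ∈ Icc A B, u x ≤ 0 := by
  intro x₀ hx₀
  by_contra hpos
  push_neg at hpos
  have hcont : ContinuousOn u (Icc A B) := fun x hx => (hd x hx).continuousWithinAt
  have hsub : Icc A x₀ ⊆ Icc A B := Icc_subset_Icc le_rfl hx₀.2
  set S : Set ℝ := {x | x ∈ Icc A x₀ ∧ u x ≤ 0} with hS
  have hA : A ∈ S := ⟨⟨le_rfl, hx₀.1⟩, h0⟩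
  have hScl : IsClosed S := by
    have : S = Icc A x₀ ∩ u ⁻¹' Iic 0 := by ext x; simp [hS]
    rw [this]
    exact (hcont.mono hsub).preimage_isClosed_of_isClosed isClosed_Icc isClosed_Iic
  have hScp : IsCompact S := isCompact_Icc.of_isClosed_subset hScl (fun x hx => hx.1)
  obtain ⟨hw1, hw2⟩ : sSup S ∈ S := hScp.sSup_mem ⟨A, hA⟩
  have hwlt : sSup S < x₀ := lt_of_le_of_ne hw1.2 (fun h => absurd hw2 (by rw [h]; exact not_le.2 hpos))
  have hup : ∀ x, sSup S < x → x ≤ x₀ → 0 < u x := by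
    intro x hwx hxx
    by_contra h
    push_neg at h
    exact absurd (le_csSup hScp.bddAbove ⟨⟨hw1.1.trans hwx.le, hxx⟩, h⟩) (not_le.2 hwx)
  have hanti : AntitoneOn u (Icc (sSup S) x₀) := by
    have hmem : ∀ x ∈ Ioo (sSup S) x₀, Icc A B ∈ nhds x := fun x hx =>
      Icc_mem_nhds (lt_of_le_of_lt hw1.1 hx.1) (lt_of_lt_of_le hx.2 hx₀.2)
    have hxB : ∀ x ∈ Ioo (sSup S) x₀, x ∈ Icc A B := fun x hx =>
      ⟨hw1.1.trans hx.1.le, hx.2.le.trans hx₀.2⟩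
    apply antitoneOn_of_deriv_nonpos (convex_Icc _ _)
      (hcont.mono (Icc_subset_Icc hw1.1 hx₀.2))
    · rw [interior_Icc]
      intro x hx
      exact ((hd x (hxB x hx)).hasDerivAt (hmem x hx)).differentiableAt.differentiableWithinAt
    · rw [interior_Icc]
      intro x hx
      rw [((hd x (hxB x hx)).hasDerivAt (hmem x hx)).deriv]
      exact hle x (hxB x hx) (hup x hx.1 hx.2.le).le
  have := hanti (left_mem_Icc.2 hwlt.le) (right_mem_Icc.2 hwlt.le) hwlt.le
  linarith [hw2]

/-- Threshold version: it suffices that `u' ≤ 0` wherever `0 ≤ u < c`. -/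
lemma aux15_nonpos' (u u' : ℝ → ℝ) (A B c : ℝ) (hc : 0 < c)
    (hd : ∀ x ∈ Icc A B, HasDerivWithinAt u (u' x) (Icc A B) x)
    (h0 : u A ≤ 0)
    (hle : ∀ x ∈ Icc A B, 0 ≤ u x → u x < c → u' x ≤ 0) :
    ∀ x ∈ Icc A B, u x ≤ 0 := by
  intro x₀ hx₀
  have hAB : A ≤ B := hx₀.1.trans hx₀.2
  have hcont : ContinuousOn u (Icc A B) := fun x hx => (hd x hx).continuousWithinAt
  set S : Set ℝ := {x | x ∈ Icc A B ∧ ∀ y ∈ Icc A x, u y ≤ 0} with hS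
  have hA : A ∈ S := ⟨⟨le_rfl, hAB⟩, fun y hy => by rw [le_antisymm hy.2 hy.1]; exact h0⟩
  have hbdd : BddAbove S := ⟨B, fun x hx => hx.1.2⟩
  have hmIcc : sSup S ∈ Icc A B := ⟨le_csSup hbdd hA, csSup_le ⟨A, hA⟩ (fun x hx => hx.1.2)⟩
  have hlt : ∀ y, A ≤ y → y < sSup S → u y ≤ 0 := by
    intro y hAy hym
    obtain ⟨x, hxS, hyx⟩ := exists_lt_of_lt_csSup ⟨A, hA⟩ hym
    exact hxS.2 y ⟨hAy, hyx.le⟩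
  have hum : u (sSup S) ≤ 0 := by
    rcases eq_or_lt_of_le hmIcc.1 with h | h
    · rw [← h]; exact h0
    · have hne : (nhdsWithin (sSup S) (Ico A (sSup S))).NeBot := by
        rw [← mem_closure_iff_nhdsWithin_neBot, closure_Ico h.ne]
        exact right_mem_Icc.2 hmIcc.1
      have htd : Filter.Tendsto u (nhdsWithin (sSup S) (Ico A (sSup S))) (nhds (u (sSup S))) :=
        (hcont (sSup S) hmIcc).mono_left
          (nhdsWithin_mono _ (fun y hy => ⟨hy.1, hy.2.le.trans hmIcc.2⟩))
      exact le_of_tendsto htd (Filter.eventually_of_mem self_mem_nhdsWithin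
        (fun y hy => hlt y hy.1 hy.2))
  have hallm : ∀ y ∈ Icc A (sSup S), u y ≤ 0 := by
    intro y hy
    rcases eq_or_lt_of_le hy.2 with h | h
    · rw [h]; exact hum
    · exact hlt y hy.1 h
  rcases eq_or_lt_of_le hmIcc.2 with hmB | hmB
  · exact hallm x₀ ⟨hx₀.1, hx₀.2.trans hmB.ge⟩
  · exfalso
    have hev : u ⁻¹' Iio c ∈ nhdsWithin (sSup S) (Icc A B) :=
      (hcont (sSup S) hmIcc) (Iio_mem_nhds (hum.trans_lt hc))
    rw [Metric.mem_nhdsWithin_iff] at hev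
    obtain ⟨δ, hδ, hball⟩ := hev
    have hmB' : sSup S < min B (sSup S + δ/2) := lt_min hmB (by linarith)
    have hB'B : min B (sSup S + δ/2) ≤ B := min_le_left _ _
    have hsubm : ∀ x ∈ Icc (sSup S) (min B (sSup S + δ/2)), x ∈ Icc A B :=
      fun x hx => ⟨hmIcc.1.trans hx.1, hx.2.trans hB'B⟩
    have hcsmall : ∀ x ∈ Icc (sSup S) (min B (sSup S + δ/2)), u x < c := by
      intro x hx
      apply hball
      refine ⟨?_, hsubm x hx⟩
      rw [Metric.mem_ball, Real.dist_eq, abs_of_nonneg (by linarith [hx.1])]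
      have : x ≤ sSup S + δ/2 := hx.2.trans (min_le_right _ _)
      linarith
    have hres := aux15_nonpos u u' (sSup S) (min B (sSup S + δ/2))
      (fun x hx => (hd x (hsubm x hx)).mono (fun y hy => hsubm y hy))
      hum
      (fun x hx h0x => hle x (hsubm x hx) h0x (hcsmall x hx))
    have hB'S : min B (sSup S + δ/2) ∈ S := by
      refine ⟨⟨hmIcc.1.trans hmB'.le, hB'B⟩, fun y hy => ?_⟩
      rcases le_total y (sSup S) with h | h
      · exact hallm y ⟨hy.1, h⟩
      · exact hres y ⟨h, hy.2⟩
    exact absurd (le_csSup hbdd hB'S) (not_le.2 hmB')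

/-- Comparison of a solution with a supersolution. -/
lemma aux15_sol_le (σ τ gσ gτ : ℝ → ℝ) (A B : ℝ)
    (hσd : ∀ x ∈ Icc A B, HasDerivWithinAt σ (gσ x) (Icc A B) x)
    (hτd : ∀ x ∈ Icc A B, HasDerivWithinAt τ (gτ x) (Icc A B) x)
    (h0 : σ A ≤ τ A)
    (key : ∀ x ∈ Icc A B, τ x ≤ σ x → gσ x ≤ gτ x) :
    ∀ x ∈ Icc A B, σ x ≤ τ x := by
  intro x hx
  have := aux15_nonpos (fun y => σ y - τ y) (fun y => gσ y - gτ y) A B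
    (fun y hy => (hσd y hy).sub (hτd y hy)) (by simpa using h0)
    (fun y hy hy0 => sub_nonpos.2 (key y hy (sub_nonneg.1 hy0))) x hx
  linarith [this]

/-- Invariance of an interval `[a,b]` for a scalar ODE with decreasing RHS. -/
lemma aux15_sol_inv (f σ : ℝ → ℝ) (a b : ℝ)
    (ha : 0 < a)
    (hfa : 0 ≤ f a) (hfb : f b ≤ 0)
    (hfanti : ∀ x y : ℝ, 0 ≤ x → x ≤ y → f y ≤ f x)
    (h0a : a ≤ σ 0) (h0b : σ 0 ≤ b)
    (hσd : ∀ v : ℝ, 0 ≤ v → HasDerivWithinAt σ (f (σ v)) (Set.Ici 0) v) :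
    ∀ v : ℝ, 0 ≤ v → a ≤ σ v ∧ σ v ≤ b := by
  intro v hv
  have hmono : ∀ x ∈ Icc (0:ℝ) v, HasDerivWithinAt σ (f (σ x)) (Icc 0 v) x :=
    fun x hx => (hσd x hx.1).mono (fun y hy => hy.1)
  constructor
  · have := aux15_nonpos' (fun y => a - σ y) (fun y => -f (σ y)) 0 v a ha
      (fun x hx => (hmono x hx).const_sub a) (by show a - σ 0 ≤ 0; linarith)
      (fun x hx h0x hxc => by
        have h1 : 0 < σ x := by linarith
        have h2 : σ x ≤ a := by linarith
        have := hfanti (σ x) a h1.le h2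
        linarith) v ⟨hv, le_rfl⟩
    linarith [this]
  · have := aux15_nonpos (fun y => σ y - b) (fun y => f (σ y)) 0 v
      (fun x hx => (hmono x hx).sub_const b) (by show σ 0 - b ≤ 0; linarith)
      (fun x hx h0x => by
        have hb0 : (0:ℝ) ≤ b := le_trans ha.le (le_trans h0a h0b)
        have := hfanti b (σ x) hb0 (by linarith)
        linarith) v ⟨hv, le_rfl⟩
    linarith [this]

/-- A `C¹` function on `[0,∞)` satisfies a Lipschitz bound on `[0,b]`. -/
lemma aux15_lip (μ : ℝ → ℝ) (b : ℝ) (hb : 0 < b)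
    (hμC1 : ContDiffOn ℝ 1 μ (Set.Ici 0)) :
    ∃ K : ℝ, 0 ≤ K ∧ ∀ x y : ℝ, 0 ≤ y → y ≤ x → x ≤ b → |μ x - μ y| ≤ K * (x - y) := by
  have hdiff : DifferentiableOn ℝ μ (Ici (0:ℝ)) := hμC1.differentiableOn one_ne_zero
  have hgc : ContinuousOn (derivWithin μ (Ici (0:ℝ))) (Ici (0:ℝ)) :=
    hμC1.continuousOn_derivWithin (uniqueDiffOn_Ici 0) le_rfl
  obtain ⟨C, hC⟩ := (isCompact_Icc (a := (0:ℝ)) (b := b)).exists_bound_of_continuousOn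
    (hgc.mono Icc_subset_Ici_self)
  have hlip : LipschitzOnWith C.toNNReal μ (Icc 0 b) := by
    apply (convex_Icc (0:ℝ) b).lipschitzOnWith_of_nnnorm_hasDerivWithin_le
      (f' := fun x => derivWithin μ (Ici (0:ℝ)) x)
    · intro x hx
      exact ((hdiff x hx.1).hasDerivWithinAt).mono Icc_subset_Ici_self
    · intro x hx
      rw [← NNReal.coe_le_coe, coe_nnnorm, Real.coe_toNNReal']
      exact (hC x hx).trans (le_max_left _ _)
  refine ⟨C.toNNReal, NNReal.coe_nonneg _, fun x y hy hyx hxb => ?_⟩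
  have := hlip.dist_le_mul x ⟨hy.trans hyx, hxb⟩ y ⟨hy, hyx.trans hxb⟩
  rw [Real.dist_eq, Real.dist_eq] at this
  calc |μ x - μ y| ≤ C.toNNReal * |x - y| := this
    _ = C.toNNReal * (x - y) := by rw [abs_of_nonneg (by linarith)]


set_option maxHeartbeats 1000000 in
/-- For 0 < s ≤ s̄₁ and t > 0, the map h(v) = φ(1, φ(2, s, v), t − v) is strictly
decreasing on [0, t], and h(v₁) − h(v₂) ≤ (D s_in + 2 k μ(s̄₁)) (v₂ − v₁) for
0 ≤ v₁ ≤ v₂ ≤ t. -/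
theorem stmt_15
    (D sIn k : ℝ) (μ : ℝ → ℝ)
    (hD : 0 < D) (hsIn : 0 < sIn) (hk : 0 < k)
    (hμC1 : ContDiffOn ℝ 1 μ (Set.Ici 0))
    (hμmono : StrictMonoOn μ (Set.Ici 0))
    (hμ0 : μ 0 = 0)
    (hμpos : ∀ s : ℝ, 0 < s → 0 < μ s)
    (sbar : ℕ → ℝ)
    (hsbar_mem : ∀ ℓ : ℕ, 1 ≤ ℓ → sbar ℓ ∈ Set.Ioo 0 sIn)
    (hsbar_eq : ∀ ℓ : ℕ, 1 ≤ ℓ → D * (sIn - sbar ℓ) - k * μ (sbar ℓ) * (ℓ : ℝ) = 0)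
    (phi : ℕ → ℝ → ℝ → ℝ)
    (hphi_init : ∀ ℓ : ℕ, 1 ≤ ℓ → ∀ s₀ : ℝ, 0 ≤ s₀ → phi ℓ s₀ 0 = s₀)
    (hphi_deriv : ∀ ℓ : ℕ, 1 ≤ ℓ → ∀ s₀ : ℝ, 0 ≤ s₀ → ∀ t : ℝ, 0 ≤ t →
      HasDerivWithinAt (phi ℓ s₀)
        (D * (sIn - phi ℓ s₀ t) - k * μ (phi ℓ s₀ t) * (ℓ : ℝ)) (Set.Ici 0) t) :
    ∀ t : ℝ, 0 < t → ∀ s : ℝ, 0 < s → s ≤ sbar 1 →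
      StrictAntiOn (fun v => phi 1 (phi 2 s v) (t - v)) (Set.Icc 0 t) ∧
      ∀ v₁ v₂ : ℝ, 0 ≤ v₁ → v₁ ≤ v₂ → v₂ ≤ t →
        phi 1 (phi 2 s v₁) (t - v₁) - phi 1 (phi 2 s v₂) (t - v₂)
          ≤ (D * sIn + 2 * k * μ (sbar 1)) * (v₂ - v₁) := by
  intro t ht s hs hsb
  obtain ⟨hb1pos, hb1lt⟩ := hsbar_mem 1 le_rfl
  obtain ⟨hb2pos, hb2lt⟩ := hsbar_mem 2 (by norm_num)
  have hμb : 0 < μ (sbar 1) := hμpos _ hb1pos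
  have hμmono' : ∀ x y : ℝ, 0 ≤ x → x ≤ y → μ x ≤ μ y := fun x y hx hxy =>
    hμmono.monotoneOn (Set.mem_Ici.2 hx) (Set.mem_Ici.2 (hx.trans hxy)) hxy
  have hμnn : ∀ x : ℝ, 0 ≤ x → 0 ≤ μ x := fun x hx => hμ0 ▸ hμmono' 0 x le_rfl hx
  have fanti : ∀ (ℓ : ℕ) (x y : ℝ), 0 ≤ x → x ≤ y →
      D * (sIn - y) - k * μ y * (ℓ:ℝ) ≤ D * (sIn - x) - k * μ x * (ℓ:ℝ) := by
    intro ℓ x y hx hxy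
    have h1 := hμmono' x y hx hxy
    have h2 : (0:ℝ) ≤ (ℓ:ℝ) := Nat.cast_nonneg ℓ
    nlinarith [mul_nonneg (mul_nonneg hk.le h2) (sub_nonneg.2 h1),
      mul_nonneg hD.le (sub_nonneg.2 hxy)]
  have hf1b : D * (sIn - sbar 1) - k * μ (sbar 1) * ((1:ℕ):ℝ) = 0 := hsbar_eq 1 le_rfl
  have hf2b2 : D * (sIn - sbar 2) - k * μ (sbar 2) * ((2:ℕ):ℝ) = 0 := hsbar_eq 2 (by norm_num)
  have hf2b1 : D * (sIn - sbar 1) - k * μ (sbar 1) * ((2:ℕ):ℝ) ≤ 0 := by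
    have h1 := hf1b
    push_cast at h1 ⊢
    nlinarith [mul_pos hk hμb]
  have ha2pos : 0 < min s (sbar 2) := lt_min hs hb2pos
  have hq0 : phi 2 s 0 = s := hphi_init 2 (by norm_num) s hs.le
  have hqinv : ∀ v : ℝ, 0 ≤ v → min s (sbar 2) ≤ phi 2 s v ∧ phi 2 s v ≤ sbar 1 := by
    apply aux15_sol_inv (fun x => D * (sIn - x) - k * μ x * ((2:ℕ):ℝ)) (phi 2 s)
      (min s (sbar 2)) (sbar 1) ha2pos
    · linarith [fanti 2 (min s (sbar 2)) (sbar 2) ha2pos.le (min_le_right _ _), hf2b2]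
    · exact hf2b1
    · exact fanti 2
    · rw [hq0]; exact min_le_left _ _
    · rw [hq0]; exact hsb
    · exact fun v hv => hphi_deriv 2 (by norm_num) s hs.le v hv
  have hp1inv : ∀ x : ℝ, 0 < x → x ≤ sbar 1 → ∀ u : ℝ, 0 ≤ u →
      x ≤ phi 1 x u ∧ phi 1 x u ≤ sbar 1 := by
    intro x hx hxb
    have hinit : phi 1 x 0 = x := hphi_init 1 le_rfl x hx.le
    apply aux15_sol_inv (fun y => D * (sIn - y) - k * μ y * ((1:ℕ):ℝ)) (phi 1 x) x (sbar 1) hx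
    · linarith [fanti 1 x (sbar 1) hx.le hxb, hf1b]
    · linarith [hf1b]
    · exact fanti 1
    · rw [hinit]
    · rw [hinit]; exact hxb
    · exact fun v hv => hphi_deriv 1 le_rfl x hx.le v hv
  obtain ⟨K, hK0, hKlip⟩ := aux15_lip μ (sbar 1) hb1pos hμC1
  have hLf : ∀ x y : ℝ, 0 ≤ y → y ≤ x → x ≤ sbar 1 →
      -((D + k*K) * (x - y)) ≤ (D * (sIn - x) - k * μ x * ((1:ℕ):ℝ))
        - (D * (sIn - y) - k * μ y * ((1:ℕ):ℝ)) := by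
    intro x y hy hyx hxb
    have h1 := (abs_le.1 (hKlip x y hy hyx hxb)).2
    push_cast
    nlinarith [mul_le_mul_of_nonneg_left h1 hk.le]
  -- semigroup property
  have hsg : ∀ x : ℝ, 0 < x → x ≤ sbar 1 → ∀ α : ℝ, 0 ≤ α → ∀ β : ℝ, 0 ≤ β →
      phi 1 x (α + β) = phi 1 (phi 1 x α) β := by
    intro x hx hxb α hα β hβ
    have hx' := hp1inv x hx hxb α hα
    have hx'pos : 0 < phi 1 x α := lt_of_lt_of_le hx hx'.1
    have hσd : ∀ v ∈ Icc (0:ℝ) β, HasDerivWithinAt (fun w => phi 1 x (α + w))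
        (D * (sIn - phi 1 x (α + v)) - k * μ (phi 1 x (α + v)) * ((1:ℕ):ℝ)) (Icc 0 β) v := by
      intro v hv
      have houter := hphi_deriv 1 le_rfl x hx.le (α + v) (by linarith [hv.1])
      have hinner : HasDerivWithinAt (fun w : ℝ => α + w) 1 (Icc (0:ℝ) β) v :=
        (hasDerivWithinAt_id v _).const_add α
      have hmaps : MapsTo (fun w : ℝ => α + w) (Icc (0:ℝ) β) (Ici (0:ℝ)) :=
        fun z hz => by simp only [mem_Ici]; linarith [hz.1]
      simpa [Function.comp_def] using houter.comp v hinner hmaps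
    have hτd : ∀ v ∈ Icc (0:ℝ) β, HasDerivWithinAt (phi 1 (phi 1 x α))
        (D * (sIn - phi 1 (phi 1 x α) v) - k * μ (phi 1 (phi 1 x α) v) * ((1:ℕ):ℝ))
        (Icc 0 β) v :=
      fun v hv => (hphi_deriv 1 le_rfl _ hx'pos.le v hv.1).mono (fun z hz => hz.1)
    have hval : ∀ v ∈ Icc (0:ℝ) β, 0 < phi 1 x (α + v) ∧ 0 < phi 1 (phi 1 x α) v := by
      intro v hv
      constructor
      · exact lt_of_lt_of_le hx (hp1inv x hx hxb (α + v) (by linarith [hv.1])).1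
      · exact lt_of_lt_of_le hx'pos (hp1inv _ hx'pos hx'.2 v hv.1).1
    have hinit : phi 1 (phi 1 x α) 0 = phi 1 x α := hphi_init 1 le_rfl _ hx'pos.le
    have h1 := aux15_sol_le (fun w => phi 1 x (α + w)) (phi 1 (phi 1 x α))
      (fun v => D * (sIn - phi 1 x (α + v)) - k * μ (phi 1 x (α + v)) * ((1:ℕ):ℝ))
      (fun v => D * (sIn - phi 1 (phi 1 x α) v) - k * μ (phi 1 (phi 1 x α) v) * ((1:ℕ):ℝ))
      0 β hσd hτd
      (by show phi 1 x (α + 0) ≤ phi 1 (phi 1 x α) 0; rw [add_zero, hinit])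
      (fun v hv hle => fanti 1 _ _ (hval v hv).2.le hle) β ⟨hβ, le_rfl⟩
    have h2 := aux15_sol_le (phi 1 (phi 1 x α)) (fun w => phi 1 x (α + w))
      (fun v => D * (sIn - phi 1 (phi 1 x α) v) - k * μ (phi 1 (phi 1 x α) v) * ((1:ℕ):ℝ))
      (fun v => D * (sIn - phi 1 x (α + v)) - k * μ (phi 1 x (α + v)) * ((1:ℕ):ℝ))
      0 β hτd hσd
      (by show phi 1 (phi 1 x α) 0 ≤ phi 1 x (α + 0); rw [add_zero, hinit])
      (fun v hv hle => fanti 1 _ _ (hval v hv).1.le hle) β ⟨hβ, le_rfl⟩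
    exact le_antisymm h1 h2
  -- monotone dependence on the initial condition
  have hmdep : ∀ x y : ℝ, 0 < x → x ≤ y → y ≤ sbar 1 → ∀ T : ℝ, 0 ≤ T →
      phi 1 x T ≤ phi 1 y T := by
    intro x y hx hxy hyb T hT
    have hy0 : 0 < y := lt_of_lt_of_le hx hxy
    exact aux15_sol_le (phi 1 x) (phi 1 y)
      (fun v => D * (sIn - phi 1 x v) - k * μ (phi 1 x v) * ((1:ℕ):ℝ))
      (fun v => D * (sIn - phi 1 y v) - k * μ (phi 1 y v) * ((1:ℕ):ℝ))
      0 T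
      (fun v hv => (hphi_deriv 1 le_rfl x hx.le v hv.1).mono (fun z hz => hz.1))
      (fun v hv => (hphi_deriv 1 le_rfl y hy0.le v hv.1).mono (fun z hz => hz.1))
      (by rw [hphi_init 1 le_rfl x hx.le, hphi_init 1 le_rfl y hy0.le]; exact hxy)
      (fun v hv hle => fanti 1 _ _ (lt_of_lt_of_le hy0 (hp1inv y hy0 hyb v hv.1).1).le hle)
      T ⟨hT, le_rfl⟩
  -- contraction
  have hcontr : ∀ x y : ℝ, 0 < x → x ≤ y → y ≤ sbar 1 → ∀ T : ℝ, 0 ≤ T →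
      phi 1 y T - phi 1 x T ≤ y - x := by
    intro x y hx hxy hyb T hT
    have hy0 : 0 < y := lt_of_lt_of_le hx hxy
    have hxb : x ≤ sbar 1 := hxy.trans hyb
    have hanti : AntitoneOn (fun v => phi 1 y v - phi 1 x v) (Icc 0 T) := by
      apply antitoneOn_of_deriv_nonpos (convex_Icc _ _)
      · exact ContinuousOn.sub
          (fun v hv => ((hphi_deriv 1 le_rfl y hy0.le v hv.1).mono
            (fun z hz => hz.1)).continuousWithinAt)
          (fun v hv => ((hphi_deriv 1 le_rfl x hx.le v hv.1).mono
            (fun z hz => hz.1)).continuousWithinAt)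
      · rw [interior_Icc]
        intro v hv
        have hdy := (hphi_deriv 1 le_rfl y hy0.le v hv.1.le).hasDerivAt (Ici_mem_nhds hv.1)
        have hdx := (hphi_deriv 1 le_rfl x hx.le v hv.1.le).hasDerivAt (Ici_mem_nhds hv.1)
        exact (hdy.sub hdx).differentiableAt.differentiableWithinAt
      · rw [interior_Icc]
        intro v hv
        have hdy := (hphi_deriv 1 le_rfl y hy0.le v hv.1.le).hasDerivAt (Ici_mem_nhds hv.1)
        have hdx := (hphi_deriv 1 le_rfl x hx.le v hv.1.le).hasDerivAt (Ici_mem_nhds hv.1)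
        rw [HasDerivAt.deriv (f := fun w => phi 1 y w - phi 1 x w) (hdy.sub hdx)]
        have h0x : 0 ≤ phi 1 x v := (lt_of_lt_of_le hx (hp1inv x hx hxb v hv.1.le).1).le
        have hle := hmdep x y hx hxy hyb v hv.1.le
        linarith [fanti 1 (phi 1 x v) (phi 1 y v) h0x hle]
    have hres := hanti (left_mem_Icc.2 hT) (right_mem_Icc.2 hT) hT
    simp only at hres
    rw [hphi_init 1 le_rfl x hx.le, hphi_init 1 le_rfl y hy0.le] at hres
    linarith
  -- strict monotone dependence on the initial condition
  have hsdep : ∀ x y : ℝ, 0 < x → x < y → y ≤ sbar 1 → ∀ T : ℝ, 0 ≤ T →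
      phi 1 x T < phi 1 y T := by
    intro x y hx hxy hyb T hT
    have hy0 : 0 < y := hx.trans hxy
    have hxb : x ≤ sbar 1 := hxy.le.trans hyb
    have hGmono : MonotoneOn
        (fun v => (phi 1 y v - phi 1 x v) * Real.exp ((D + k*K) * v)) (Icc 0 T) := by
      apply monotoneOn_of_deriv_nonneg (convex_Icc _ _)
      · apply ContinuousOn.mul
        · exact ContinuousOn.sub
            (fun v hv => ((hphi_deriv 1 le_rfl y hy0.le v hv.1).mono
              (fun z hz => hz.1)).continuousWithinAt)
            (fun v hv => ((hphi_deriv 1 le_rfl x hx.le v hv.1).mono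
              (fun z hz => hz.1)).continuousWithinAt)
        · exact (Real.continuous_exp.comp (continuous_const.mul continuous_id)).continuousOn
      · rw [interior_Icc]
        intro v hv
        have hdy := (hphi_deriv 1 le_rfl y hy0.le v hv.1.le).hasDerivAt (Ici_mem_nhds hv.1)
        have hdx := (hphi_deriv 1 le_rfl x hx.le v hv.1.le).hasDerivAt (Ici_mem_nhds hv.1)
        have hde : HasDerivAt (fun w : ℝ => Real.exp ((D + k*K) * w))
            (Real.exp ((D + k*K) * v) * (D + k*K)) v := by
          simpa using ((hasDerivAt_id v).const_mul (D + k*K)).exp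
        exact ((hdy.sub hdx).mul hde).differentiableAt.differentiableWithinAt
      · rw [interior_Icc]
        intro v hv
        have hdy := (hphi_deriv 1 le_rfl y hy0.le v hv.1.le).hasDerivAt (Ici_mem_nhds hv.1)
        have hdx := (hphi_deriv 1 le_rfl x hx.le v hv.1.le).hasDerivAt (Ici_mem_nhds hv.1)
        have hde : HasDerivAt (fun w : ℝ => Real.exp ((D + k*K) * w))
            (Real.exp ((D + k*K) * v) * (D + k*K)) v := by
          simpa using ((hasDerivAt_id v).const_mul (D + k*K)).exp
        rw [HasDerivAt.deriv (f := fun w => (phi 1 y w - phi 1 x w) * Real.exp ((D + k*K) * w))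
          ((hdy.sub hdx).mul hde), Pi.sub_apply]
        have h0x : 0 ≤ phi 1 x v := (lt_of_lt_of_le hx (hp1inv x hx hxb v hv.1.le).1).le
        have hle := hmdep x y hx hxy.le hyb v hv.1.le
        have hyvb : phi 1 y v ≤ sbar 1 := (hp1inv y hy0 hyb v hv.1.le).2
        have hLb := hLf (phi 1 y v) (phi 1 x v) h0x hle hyvb
        have hexp := Real.exp_pos ((D + k*K) * v)
        nlinarith [mul_le_mul_of_nonneg_right hLb hexp.le]
    have h0T := hGmono (left_mem_Icc.2 hT) (right_mem_Icc.2 hT) hT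
    simp only at h0T
    rw [hphi_init 1 le_rfl x hx.le, hphi_init 1 le_rfl y hy0.le, mul_zero,
      Real.exp_zero, mul_one] at h0T
    have hexp := Real.exp_pos ((D + k*K) * T)
    nlinarith [h0T, hexp]
  -- the key gap estimates
  have hgap : ∀ v₁ v₂ : ℝ, 0 ≤ v₁ → v₁ < v₂ → v₂ ≤ t →
      phi 2 s v₂ < phi 1 (phi 2 s v₁) (v₂ - v₁) ∧
      phi 1 (phi 2 s v₁) (v₂ - v₁) - phi 2 s v₂
        ≤ (D * sIn + 2 * k * μ (sbar 1)) * (v₂ - v₁) := by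
    intro v₁ v₂ hv₁ h12 h2t
    obtain ⟨hq1a, hq1b⟩ := hqinv v₁ hv₁
    have hq1pos : 0 < phi 2 s v₁ := lt_of_lt_of_le ha2pos hq1a
    have hrd : ∀ u ∈ Icc v₁ v₂, HasDerivWithinAt (fun w => phi 1 (phi 2 s v₁) (w - v₁))
        (D * (sIn - phi 1 (phi 2 s v₁) (u - v₁))
          - k * μ (phi 1 (phi 2 s v₁) (u - v₁)) * ((1:ℕ):ℝ)) (Icc v₁ v₂) u := by
      intro u hu
      have houter := hphi_deriv 1 le_rfl (phi 2 s v₁) hq1pos.le (u - v₁) (by linarith [hu.1])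
      have hinner : HasDerivWithinAt (fun w : ℝ => w - v₁) 1 (Icc v₁ v₂) u :=
        (hasDerivWithinAt_id u _).sub_const v₁
      have hmaps : MapsTo (fun w : ℝ => w - v₁) (Icc v₁ v₂) (Ici (0:ℝ)) :=
        fun z hz => by simp only [mem_Ici]; linarith [hz.1]
      simpa [Function.comp_def] using houter.comp u hinner hmaps
    have hqd : ∀ u ∈ Icc v₁ v₂, HasDerivWithinAt (phi 2 s)
        (D * (sIn - phi 2 s u) - k * μ (phi 2 s u) * ((2:ℕ):ℝ)) (Icc v₁ v₂) u :=
      fun u hu => (hphi_deriv 2 (by norm_num) s hs.le u (hv₁.trans hu.1)).mono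
        (fun z hz => hv₁.trans hz.1)
    have hrinv : ∀ u ∈ Icc v₁ v₂, phi 2 s v₁ ≤ phi 1 (phi 2 s v₁) (u - v₁) ∧
        phi 1 (phi 2 s v₁) (u - v₁) ≤ sbar 1 :=
      fun u hu => hp1inv (phi 2 s v₁) hq1pos hq1b (u - v₁) (by linarith [hu.1])
    have hrv₁ : phi 1 (phi 2 s v₁) (v₁ - v₁) = phi 2 s v₁ := by
      rw [sub_self]; exact hphi_init 1 le_rfl _ hq1pos.le
    have hqr : ∀ u ∈ Icc v₁ v₂, phi 2 s u ≤ phi 1 (phi 2 s v₁) (u - v₁) := by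
      have := aux15_sol_le (phi 2 s) (fun w => phi 1 (phi 2 s v₁) (w - v₁))
        (fun u => D * (sIn - phi 2 s u) - k * μ (phi 2 s u) * ((2:ℕ):ℝ))
        (fun u => D * (sIn - phi 1 (phi 2 s v₁) (u - v₁))
          - k * μ (phi 1 (phi 2 s v₁) (u - v₁)) * ((1:ℕ):ℝ))
        v₁ v₂ hqd hrd
        (by show phi 2 s v₁ ≤ phi 1 (phi 2 s v₁) (v₁ - v₁); rw [hrv₁])
        (fun u hu hle => by
          have h0r : 0 ≤ phi 1 (phi 2 s v₁) (u - v₁) :=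
            (lt_of_lt_of_le hq1pos (hrinv u hu).1).le
          have hf := fanti 1 (phi 1 (phi 2 s v₁) (u - v₁)) (phi 2 s u) h0r hle
          have hq0' : 0 ≤ phi 2 s u :=
            (lt_of_lt_of_le ha2pos (hqinv u (hv₁.trans hu.1)).1).le
          have hμq : 0 ≤ μ (phi 2 s u) := hμnn _ hq0'
          push_cast at hf ⊢
          nlinarith [mul_nonneg hk.le hμq])
      intro u hu
      have := this u hu
      simpa using this
    have hkey : ∀ u ∈ Ioo v₁ v₂, HasDerivAt
        (fun w => phi 1 (phi 2 s v₁) (w - v₁) - phi 2 s w)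
        ((D * (sIn - phi 1 (phi 2 s v₁) (u - v₁))
            - k * μ (phi 1 (phi 2 s v₁) (u - v₁)) * ((1:ℕ):ℝ))
          - (D * (sIn - phi 2 s u) - k * μ (phi 2 s u) * ((2:ℕ):ℝ))) u := by
      intro u hu
      have h1 := (hrd u ⟨hu.1.le, hu.2.le⟩).hasDerivAt (Icc_mem_nhds hu.1 hu.2)
      have h2 := (hphi_deriv 2 (by norm_num) s hs.le u (hv₁.trans hu.1.le)).hasDerivAt
        (Ici_mem_nhds (lt_of_le_of_lt hv₁ hu.1))
      exact h1.sub h2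
    have hcontq : ContinuousOn (phi 2 s) (Icc v₁ v₂) :=
      fun u hu => (hqd u hu).continuousWithinAt
    have hcontr' : ContinuousOn (fun w => phi 1 (phi 2 s v₁) (w - v₁)) (Icc v₁ v₂) :=
      fun u hu => (hrd u hu).continuousWithinAt
    constructor
    · -- strict separation
      have hGs : StrictMonoOn (fun u => (phi 1 (phi 2 s v₁) (u - v₁) - phi 2 s u)
          * Real.exp ((D + k*K) * u)) (Icc v₁ v₂) := by
        apply strictMonoOn_of_deriv_pos (convex_Icc _ _)
        · exact (hcontr'.sub hcontq).mul
            ((Real.continuous_exp.comp (continuous_const.mul continuous_id)).continuousOn)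
        · rw [interior_Icc]
          intro u hu
          have hg := hkey u hu
          have hde : HasDerivAt (fun w : ℝ => Real.exp ((D + k*K) * w))
              (Real.exp ((D + k*K) * u) * (D + k*K)) u := by
            simpa using ((hasDerivAt_id u).const_mul (D + k*K)).exp
          rw [HasDerivAt.deriv (f := fun w => (phi 1 (phi 2 s v₁) (w - v₁) - phi 2 s w)
            * Real.exp ((D + k*K) * w)) (hg.mul hde)]
          obtain ⟨hqa, hqb⟩ := hqinv u (hv₁.trans hu.1.le)
          obtain ⟨hra, hrb⟩ := hrinv u ⟨hu.1.le, hu.2.le⟩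
          have hq0' : 0 ≤ phi 2 s u := (lt_of_lt_of_le ha2pos hqa).le
          have hqru := hqr u ⟨hu.1.le, hu.2.le⟩
          have hLb := hLf (phi 1 (phi 2 s v₁) (u - v₁)) (phi 2 s u) hq0' hqru hrb
          have hμa2 : 0 < μ (min s (sbar 2)) := hμpos _ ha2pos
          have hμqa : μ (min s (sbar 2)) ≤ μ (phi 2 s u) := hμmono' _ _ ha2pos.le hqa
          have hexp := Real.exp_pos ((D + k*K) * u)
          push_cast at hLb ⊢
          nlinarith [mul_le_mul_of_nonneg_right hLb hexp.le,
            mul_pos (mul_pos hk hμa2) hexp,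
            mul_le_mul_of_nonneg_right (mul_le_mul_of_nonneg_left hμqa hk.le) hexp.le]
      have hGlt := hGs (left_mem_Icc.2 h12.le) (right_mem_Icc.2 h12.le) h12
      simp only at hGlt
      rw [hrv₁, sub_self, zero_mul] at hGlt
      have hexp2 := Real.exp_pos ((D + k*K) * v₂)
      nlinarith [hGlt, hexp2]
    · -- growth bound
      have hMg : MonotoneOn (fun u => (D * sIn + 2 * k * μ (sbar 1)) * u
          - (phi 1 (phi 2 s v₁) (u - v₁) - phi 2 s u)) (Icc v₁ v₂) := by
        apply monotoneOn_of_deriv_nonneg (convex_Icc _ _)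
        · exact ((continuous_const.mul continuous_id).continuousOn).sub
            (hcontr'.sub hcontq)
        · rw [interior_Icc]
          intro u hu
          have hg := hkey u hu
          have hid : HasDerivAt (fun w : ℝ => (D * sIn + 2 * k * μ (sbar 1)) * w)
              (D * sIn + 2 * k * μ (sbar 1)) u := by
            simpa using (hasDerivAt_id u).const_mul (D * sIn + 2 * k * μ (sbar 1))
          exact (hid.sub hg).differentiableAt.differentiableWithinAt
        · rw [interior_Icc]
          intro u hu
          have hg := hkey u hu
          have hid : HasDerivAt (fun w : ℝ => (D * sIn + 2 * k * μ (sbar 1)) * w)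
              (D * sIn + 2 * k * μ (sbar 1)) u := by
            simpa using (hasDerivAt_id u).const_mul (D * sIn + 2 * k * μ (sbar 1))
          rw [HasDerivAt.deriv (f := fun w => (D * sIn + 2 * k * μ (sbar 1)) * w
            - (phi 1 (phi 2 s v₁) (w - v₁) - phi 2 s w)) (hid.sub hg)]
          obtain ⟨hqa, hqb⟩ := hqinv u (hv₁.trans hu.1.le)
          obtain ⟨hra, hrb⟩ := hrinv u ⟨hu.1.le, hu.2.le⟩
          have hq0' : 0 ≤ phi 2 s u := (lt_of_lt_of_le ha2pos hqa).le
          have hr0 : 0 ≤ phi 1 (phi 2 s v₁) (u - v₁) := (lt_of_lt_of_le hq1pos hra).le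
          have hμr : 0 ≤ μ (phi 1 (phi 2 s v₁) (u - v₁)) := hμnn _ hr0
          have hμq2 : μ (phi 2 s u) ≤ μ (sbar 1) := hμmono' _ _ hq0' hqb
          have hqsIn : phi 2 s u ≤ sIn := hqb.trans hb1lt.le
          push_cast
          nlinarith [mul_nonneg hD.le hr0, mul_nonneg hD.le (sub_nonneg.2 hqsIn),
            mul_nonneg hk.le hμr, mul_le_mul_of_nonneg_left hμq2 hk.le]
      have hMle := hMg (left_mem_Icc.2 h12.le) (right_mem_Icc.2 h12.le) h12.le
      simp only at hMle
      rw [hrv₁, sub_self] at hMle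
      linarith [hMle]
  refine ⟨?_, ?_⟩
  · intro v₁ hv₁ v₂ hv₂ hlt
    simp only
    obtain ⟨hstrict, -⟩ := hgap v₁ v₂ hv₁.1 hlt hv₂.2
    obtain ⟨hq1a, hq1b⟩ := hqinv v₁ hv₁.1
    have hq1pos : 0 < phi 2 s v₁ := lt_of_lt_of_le ha2pos hq1a
    have hrb := (hp1inv (phi 2 s v₁) hq1pos hq1b (v₂ - v₁) (by linarith)).2
    have hq2pos : 0 < phi 2 s v₂ := lt_of_lt_of_le ha2pos (hqinv v₂ (hv₁.1.trans hlt.le)).1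
    rw [show t - v₁ = (v₂ - v₁) + (t - v₂) by ring,
      hsg (phi 2 s v₁) hq1pos hq1b (v₂ - v₁) (by linarith) (t - v₂) (by linarith [hv₂.2])]
    exact hsdep (phi 2 s v₂) (phi 1 (phi 2 s v₁) (v₂ - v₁)) hq2pos hstrict hrb
      (t - v₂) (by linarith [hv₂.2])
  · intro v₁ v₂ h0 h12 h2t
    rcases eq_or_lt_of_le h12 with rfl | hlt
    · simp
    · obtain ⟨hstrict, hgrow⟩ := hgap v₁ v₂ h0 hlt h2t
      obtain ⟨hq1a, hq1b⟩ := hqinv v₁ h0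
      have hq1pos : 0 < phi 2 s v₁ := lt_of_lt_of_le ha2pos hq1a
      have hrb := (hp1inv (phi 2 s v₁) hq1pos hq1b (v₂ - v₁) (by linarith)).2
      have hq2pos : 0 < phi 2 s v₂ := lt_of_lt_of_le ha2pos (hqinv v₂ (h0.trans h12)).1
      rw [show t - v₁ = (v₂ - v₁) + (t - v₂) by ring,
        hsg (phi 2 s v₁) hq1pos hq1b (v₂ - v₁) (by linarith) (t - v₂) (by linarith)]
      have hcon := hcontr (phi 2 s v₂) (phi 1 (phi 2 s v₁) (v₂ - v₁)) hq2pos hstrict.le hrb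
        (t - v₂) (by linarith)
      linarith
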